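/- arXiv:1603.06630 — 2 statements merged into one kernel-verified Lean document; each statement's English description precedes it below -/
import Mathlib

section
/- Let a, b, c, d be integers with a ≠ 0 and c ≠ 0, and let f(x) = a*x + b and g(x) = c*x + d. Then liminf_{N → ∞} (1/(2N+1)) * |{x ∈ ℤ : -N ≤ x ≤ N and gcd(f(x), g(x)) = 1}| > 0 if and only if gcd(a, b, c, d) = 1 and a*d ≠ b*c. -/
open Filter

/-- The gcd of the two evaluations divides the "determinant" `a*d - b*c`. -/
private lemma gcd_dvd_det (a b c d x : ℤ) :
    (Int.gcd (a * x + b) (c * x + d) : ℤ) ∣ (a * d - b * c) := by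
  have h1 : (Int.gcd (a * x + b) (c * x + d) : ℤ) ∣ (a * x + b) := (Int.gcd_dvd_left _ _)
  have h2 : (Int.gcd (a * x + b) (c * x + d) : ℤ) ∣ (c * x + d) := (Int.gcd_dvd_right _ _)
  have : a * d - b * c = a * (c * x + d) - c * (a * x + b) := by ring
  rw [this]
  exact dvd_sub (h2.mul_left a) (h1.mul_left c)

/-- Existence of a good residue: strong induction on `n`. -/
private lemma exists_good (a b c d : ℤ)
    (h : Int.gcd a (Int.gcd b (Int.gcd c d)) = 1) :
    ∀ n : ℕ, n ≠ 0 → ∃ x : ℤ, ∀ p : ℕ, p.Prime → p ∣ n →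
      ¬((p : ℤ) ∣ a * x + b ∧ (p : ℤ) ∣ c * x + d) := by
  intro n
  induction n using Nat.strong_induction_on with
  | _ n IH =>
    intro hn
    rcases eq_or_ne n 1 with rfl | hn1
    · exact ⟨0, fun p hp hpd => absurd (Nat.eq_one_of_dvd_one hpd) hp.ne_one⟩
    have h2 : 2 ≤ n := (Nat.two_le_iff n).2 ⟨hn, hn1⟩
    set p := n.minFac with hpdef
    have hp : p.Prime := Nat.minFac_prime hn1
    set m := ordCompl[p] n with hmdef
    have hmn : m ∣ n := Nat.ordCompl_dvd n p
    have hm0 : m ≠ 0 := (Nat.ordCompl_pos p hn).ne'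
    have hpm : ¬ p ∣ m := Nat.not_dvd_ordCompl hp hn
    have hmlt : m < n := by
      have hpn : p ∣ n := Nat.minFac_dvd n
      have h1le : 1 ≤ n.factorization p := by
        rw [← hp.pow_dvd_iff_le_factorization hn, pow_one]; exact hpn
      have hgt : 1 < p ^ n.factorization p :=
        Nat.one_lt_pow (by omega) hp.one_lt
      calc m ≤ n / 2 := Nat.div_le_div_left (by omega) (by omega)
           _ < n := Nat.div_lt_self (by omega) (by omega)
    obtain ⟨x₀, hx₀⟩ := IH m hmlt hm0
    have key : ∀ t : ℤ, ∀ q : ℕ, q.Prime → q ∣ m →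
        ¬((q : ℤ) ∣ a * (x₀ + m * t) + b ∧ (q : ℤ) ∣ c * (x₀ + m * t) + d) := by
      intro t q hq hqm hand
      have hqm' : (q : ℤ) ∣ (m : ℤ) := Int.natCast_dvd_natCast.2 hqm
      apply hx₀ q hq hqm
      constructor
      · have hd := dvd_sub hand.1 (hqm'.mul_left (a * t))
        have heq : a * (x₀ + (m : ℤ) * t) + b - a * t * (m : ℤ) = a * x₀ + b := by ring
        rwa [heq] at hd
      · have hd := dvd_sub hand.2 (hqm'.mul_left (c * t))
        have heq : c * (x₀ + (m : ℤ) * t) + d - c * t * (m : ℤ) = c * x₀ + d := by ring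
        rwa [heq] at hd
    have hpick : ∃ t : ℤ, (t = 0 ∨ t = 1) ∧
        ¬((p : ℤ) ∣ a * (x₀ + m * t) + b ∧ (p : ℤ) ∣ c * (x₀ + m * t) + d) := by
      by_contra hcon
      push_neg at hcon
      have h0 := hcon 0 (Or.inl rfl); have h1 := hcon 1 (Or.inr rfl)
      have hb0 : (p:ℤ) ∣ a * x₀ + b := by simpa using h0.1
      have hd0 : (p:ℤ) ∣ c * x₀ + d := by simpa using h0.2
      have hb1 : (p:ℤ) ∣ a * (x₀ + m) + b := by simpa using h1.1
      have hd1 : (p:ℤ) ∣ c * (x₀ + m) + d := by simpa using h1.2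
      have ham : (p:ℤ) ∣ a * m := by
        have := dvd_sub hb1 hb0; simpa [mul_add] using this
      have hcm : (p:ℤ) ∣ c * m := by
        have := dvd_sub hd1 hd0; simpa [mul_add] using this
      have hpm' : ¬ (p:ℤ) ∣ (m:ℤ) := fun hh => hpm (Int.natCast_dvd_natCast.1 hh)
      have hpa : (p:ℤ) ∣ a := (Int.Prime.dvd_mul' hp ham).resolve_right hpm'
      have hpc : (p:ℤ) ∣ c := (Int.Prime.dvd_mul' hp hcm).resolve_right hpm'
      have hpb : (p:ℤ) ∣ b := by
        have := dvd_sub hb0 (hpa.mul_right x₀); simpa using this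
      have hpd : (p:ℤ) ∣ d := by
        have := dvd_sub hd0 (hpc.mul_right x₀); simpa using this
      have : (p:ℤ) ∣ (Int.gcd a (Int.gcd b (Int.gcd c d)) : ℤ) :=
        Int.dvd_coe_gcd hpa (Int.dvd_coe_gcd hpb (Int.dvd_coe_gcd hpc hpd))
      rw [h] at this
      exact hp.one_lt.ne' (Nat.eq_one_of_dvd_one (Int.ofNat_dvd.1 (by exact_mod_cast this)))
    obtain ⟨t, _, hpt⟩ := hpick
    refine ⟨x₀ + m * t, fun q hq hqn => ?_⟩
    rcases eq_or_ne q p with rfl | hqp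
    · exact hpt
    · exact key t q hq (Nat.dvd_ordCompl_of_dvd_not_dvd hqn
        (fun hh => hqp ((Nat.prime_dvd_prime_iff_eq hp hq).1 hh).symm))

/-- If the gcd is 1 at `x`, it is 1 at `x + j * |a*d - b*c|`. -/
private lemma good_shift (a b c d : ℤ) (x j : ℤ)
    (hx : Int.gcd (a * x + b) (c * x + d) = 1) :
    Int.gcd (a * (x + j * ((a * d - b * c).natAbs : ℤ)) + b)
      (c * (x + j * ((a * d - b * c).natAbs : ℤ)) + d) = 1 := by
  set M : ℤ := ((a * d - b * c).natAbs : ℤ) with hM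
  set y := x + j * M with hy
  set k := Int.gcd (a * y + b) (c * y + d) with hk
  have hkD : (k : ℤ) ∣ (a * d - b * c) := gcd_dvd_det a b c d y
  have hkM : (k : ℤ) ∣ M := Int.dvd_natAbs.mpr hkD
  have h1 : (k : ℤ) ∣ a * y + b := (Int.gcd_dvd_left _ _)
  have h2 : (k : ℤ) ∣ c * y + d := (Int.gcd_dvd_right _ _)
  have e1 : (k : ℤ) ∣ a * x + b := by
    have hd := dvd_sub h1 (hkM.mul_left (a * j))
    have heq : a * y + b - a * j * M = a * x + b := by rw [hy]; ring
    rwa [heq] at hd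
  have e2 : (k : ℤ) ∣ c * x + d := by
    have hd := dvd_sub h2 (hkM.mul_left (c * j))
    have heq : c * y + d - c * j * M = c * x + d := by rw [hy]; ring
    rwa [heq] at hd
  have hone : (k : ℤ) ∣ (Int.gcd (a * x + b) (c * x + d) : ℤ) := Int.dvd_coe_gcd e1 e2
  rw [hx] at hone
  exact Nat.eq_one_of_dvd_one (Int.ofNat_dvd.1 (by exact_mod_cast hone))

/-- Evaluationally coprime linear polynomials: the lower asymptotic density of
integers `x ∈ [-N, N]` with `gcd(a*x+b, c*x+d) = 1` is positive iff
`gcd(a,b,c,d) = 1` and `a*d ≠ b*c`. -/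
theorem stmt_0 (a b c d : ℤ) (ha : a ≠ 0) (hc : c ≠ 0) :
    (0 < Filter.liminf (fun N : ℕ =>
        (((Finset.Icc (-(N : ℤ)) (N : ℤ)).filter
          (fun x => Int.gcd (a * x + b) (c * x + d) = 1)).card : ℝ) / (2 * N + 1))
      Filter.atTop)
      ↔ (Int.gcd a (Int.gcd b (Int.gcd c d)) = 1 ∧ a * d ≠ b * c) := by
  set u : ℕ → ℝ := fun N : ℕ =>
      (((Finset.Icc (-(N : ℤ)) (N : ℤ)).filter
        (fun x => Int.gcd (a * x + b) (c * x + d) = 1)).card : ℝ) / (2 * N + 1) with hu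
  have hcard_Icc : ∀ N : ℕ, (Finset.Icc (-(N:ℤ)) (N:ℤ)).card = 2 * N + 1 := by
    intro N; rw [Int.card_Icc]; omega
  constructor
  · intro hlim
    constructor
    · -- gcd(a,b,c,d) = 1
      by_contra hg
      have hempty : ∀ N : ℕ, (Finset.Icc (-(N:ℤ)) (N:ℤ)).filter
          (fun x => Int.gcd (a * x + b) (c * x + d) = 1) = ∅ := by
        intro N
        rw [Finset.filter_eq_empty_iff]
        intro x _ hx1
        set g : ℕ := Int.gcd a (Int.gcd b (Int.gcd c d)) with hgdef
        have hga : (g:ℤ) ∣ a := (Int.gcd_dvd_left _ _)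
        have hgr : (g:ℤ) ∣ (Int.gcd b (Int.gcd c d) : ℤ) := (Int.gcd_dvd_right _ _)
        have hgb : (g:ℤ) ∣ b := hgr.trans (Int.gcd_dvd_left _ _)
        have hgr2 : (g:ℤ) ∣ (Int.gcd c d : ℤ) := hgr.trans (Int.gcd_dvd_right _ _)
        have hgc : (g:ℤ) ∣ c := hgr2.trans (Int.gcd_dvd_left _ _)
        have hgd : (g:ℤ) ∣ d := hgr2.trans (Int.gcd_dvd_right _ _)
        have h1 : (g:ℤ) ∣ a * x + b := dvd_add (hga.mul_right x) hgb
        have h2 : (g:ℤ) ∣ c * x + d := dvd_add (hgc.mul_right x) hgd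
        have : (g:ℤ) ∣ (Int.gcd (a * x + b) (c * x + d) : ℤ) := Int.dvd_coe_gcd h1 h2
        rw [hx1] at this
        exact hg (Nat.eq_one_of_dvd_one (Int.ofNat_dvd.1 (by exact_mod_cast this)))
      have hzero : u = fun _ => (0:ℝ) := by
        funext N; simp only [hu, hempty N, Finset.card_empty, Nat.cast_zero, zero_div]
      rw [hzero, Filter.liminf_const (0:ℝ)] at hlim
      exact lt_irrefl _ hlim
    · -- a*d ≠ b*c
      intro heq
      set K : ℕ := a.natAbs + b.natAbs with hK
      have hsub : ∀ N : ℕ, (Finset.Icc (-(N:ℤ)) (N:ℤ)).filter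
          (fun x => Int.gcd (a * x + b) (c * x + d) = 1) ⊆ Finset.Icc (-(K:ℤ)) (K:ℤ) := by
        intro N x hx
        rw [Finset.mem_filter] at hx
        obtain ⟨-, hx1⟩ := hx
        have hcop : IsCoprime (a * x + b) (c * x + d) := Int.isCoprime_iff_gcd_eq_one.mpr hx1
        have hdvd : (a * x + b) ∣ a * (c * x + d) := ⟨c, by linear_combination heq⟩
        have hdiva : (a * x + b) ∣ a := hcop.dvd_of_dvd_mul_right hdvd
        have hne : a * x + b ≠ 0 := by
          intro h0; rw [h0] at hdiva; exact ha (zero_dvd_iff.mp hdiva)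
        have habs : |a * x + b| ≤ |a| :=
          Int.le_of_dvd (abs_pos.mpr ha) ((abs_dvd _ _).mpr ((dvd_abs _ _).mpr hdiva))
        have h1a : (1:ℤ) ≤ |a| := Int.one_le_abs (by simpa using ha)
        have hax : |a * x| ≤ |a| + |b| := by
          calc |a * x| = |(a * x + b) + (-b)| := by ring_nf
            _ ≤ |a * x + b| + |(-b)| := abs_add_le _ _
            _ ≤ |a| + |b| := by rw [abs_neg]; exact add_le_add_left habs _
        have hxa : |x| ≤ |a| + |b| := by
          have := abs_mul a x
          nlinarith [abs_nonneg x, abs_nonneg a]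
        rw [Finset.mem_Icc]
        have hKc : ((K:ℕ):ℤ) = |a| + |b| := by
          rw [hK]; push_cast [Int.natCast_natAbs]; ring
        rw [hKc]
        constructor <;> [linarith [neg_abs_le x]; linarith [le_abs_self x]]
      have hbound : ∀ N : ℕ, u N ≤ (2 * K + 1 : ℝ) / (2 * N + 1) := by
        intro N
        have hc1 := Finset.card_le_card (hsub N)
        have hc2 : (Finset.Icc (-(K:ℤ)) (K:ℤ)).card = 2 * K + 1 := by
          rw [Int.card_Icc]; omega
        rw [hc2] at hc1
        simp only [hu]
        gcongr
        exact_mod_cast hc1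
      have h2N : Tendsto (fun N : ℕ => (2 * N + 1 : ℝ)) atTop atTop := by
        apply tendsto_atTop_add_const_right
        exact (tendsto_natCast_atTop_atTop).const_mul_atTop two_pos
      have htop : Tendsto (fun N : ℕ => (2 * K + 1 : ℝ) / (2 * N + 1)) atTop (nhds 0) := by
        simp only [div_eq_mul_inv]
        have := (tendsto_inv_atTop_zero.comp h2N)
        simpa using tendsto_const_nhds.mul this
      have hunn : ∀ N : ℕ, (0:ℝ) ≤ u N := by
        intro N; simp only [hu]; positivity
      have htend : Tendsto u atTop (nhds 0) :=
        tendsto_of_tendsto_of_tendsto_of_le_of_le tendsto_const_nhds htop hunn hbound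
      rw [htend.liminf_eq] at hlim
      exact lt_irrefl _ hlim
  · rintro ⟨hg, hD⟩
    have hD0 : a * d - b * c ≠ 0 := sub_ne_zero.mpr hD
    set M : ℕ := (a * d - b * c).natAbs with hMdef
    have hM0 : M ≠ 0 := Int.natAbs_ne_zero.mpr hD0
    have hMpos : (0:ℤ) < (M:ℤ) := by exact_mod_cast Nat.pos_of_ne_zero hM0
    obtain ⟨x₀, hx₀⟩ := exists_good a b c d hg M hM0
    have hx₀1 : Int.gcd (a * x₀ + b) (c * x₀ + d) = 1 := by
      by_contra hk
      have hkM : Int.gcd (a * x₀ + b) (c * x₀ + d) ∣ M :=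
        Int.ofNat_dvd.mp (Int.dvd_natAbs.mpr (gcd_dvd_det a b c d x₀))
      have hp : (Int.gcd (a * x₀ + b) (c * x₀ + d)).minFac.Prime := Nat.minFac_prime hk
      have hpk := Nat.minFac_dvd (Int.gcd (a * x₀ + b) (c * x₀ + d))
      refine hx₀ _ hp (hpk.trans hkM) ⟨?_, ?_⟩
      · exact (Int.natCast_dvd_natCast.mpr hpk).trans (Int.gcd_dvd_left _ _)
      · exact (Int.natCast_dvd_natCast.mpr hpk).trans (Int.gcd_dvd_right _ _)
    have hXle : x₀ ≤ (x₀.natAbs : ℤ) := Int.le_natAbs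
    have hXge : -((x₀.natAbs : ℤ)) ≤ x₀ := by
      rw [← Int.abs_eq_natAbs]; exact neg_abs_le x₀
    have hev : ∀ᶠ N : ℕ in atTop, (1:ℝ) / (4 * M) ≤ u N := by
      rw [eventually_atTop]
      refine ⟨2 * (x₀.natAbs + M) + 2, fun N hN => ?_⟩
      have hNZ : (2:ℤ) * (x₀.natAbs + M) + 2 ≤ (N:ℤ) := by exact_mod_cast hN
      set L : ℤ := ((N:ℤ) - x₀) / (M:ℤ) with hLdef
      have hdm := Int.mul_ediv_add_emod ((N:ℤ) - x₀) (M:ℤ)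
      have hr0 : 0 ≤ ((N:ℤ) - x₀) % (M:ℤ) := Int.emod_nonneg _ (ne_of_gt hMpos)
      have hrM : ((N:ℤ) - x₀) % (M:ℤ) < (M:ℤ) := Int.emod_lt_of_pos _ hMpos
      have hMLle : (M:ℤ) * L ≤ (N:ℤ) - x₀ := by linarith
      have hMLge : (N:ℤ) - x₀ - (M:ℤ) + 1 ≤ (M:ℤ) * L := by linarith
      have hL1 : 1 ≤ L := by
        by_contra hcon
        push_neg at hcon
        have hML0 : (M:ℤ) * L ≤ 0 :=
          mul_nonpos_of_nonneg_of_nonpos hMpos.le (by omega)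
        linarith
      have hsubset : (Finset.Icc (1:ℤ) L).image (fun j => x₀ + j * (M:ℤ)) ⊆
          (Finset.Icc (-(N:ℤ)) (N:ℤ)).filter
            (fun x => Int.gcd (a * x + b) (c * x + d) = 1) := by
        intro y hy
        simp only [Finset.mem_image, Finset.mem_Icc] at hy
        obtain ⟨j, ⟨hj1, hjL⟩, rfl⟩ := hy
        rw [Finset.mem_filter, Finset.mem_Icc]
        have hjMlow : (M:ℤ) ≤ j * (M:ℤ) := le_mul_of_one_le_left hMpos.le hj1
        have hjMhigh : j * (M:ℤ) ≤ L * (M:ℤ) := mul_le_mul_of_nonneg_right hjL hMpos.le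
        have hLM : L * (M:ℤ) = (M:ℤ) * L := mul_comm _ _
        refine ⟨⟨by linarith, by linarith⟩, ?_⟩
        have hgood := good_shift a b c d x₀ j hx₀1
        rw [← hMdef] at hgood
        exact hgood
      have hinj : Set.InjOn (fun j : ℤ => x₀ + j * (M:ℤ)) (Finset.Icc (1:ℤ) L) := by
        intro i _ j _ hij
        simp only at hij
        exact mul_right_cancel₀ (ne_of_gt hMpos) (by linarith)
      have hcard_img : ((Finset.Icc (1:ℤ) L).image (fun j => x₀ + j * (M:ℤ))).card
          = L.toNat := by
        rw [Finset.card_image_of_injOn hinj, Int.card_Icc]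
        simp
      have hcount : L.toNat ≤ ((Finset.Icc (-(N:ℤ)) (N:ℤ)).filter
          (fun x => Int.gcd (a * x + b) (c * x + d) = 1)).card := by
        rw [← hcard_img]; exact Finset.card_le_card hsubset
      -- now the real inequality
      have hMR : (0:ℝ) < (M:ℝ) := by exact_mod_cast Nat.pos_of_ne_zero hM0
      simp only [hu]
      rw [div_le_div_iff₀ (by positivity) (by positivity)]
      have hint : (2:ℤ) * N + 1 ≤ (((Finset.Icc (-(N:ℤ)) (N:ℤ)).filter
          (fun x => Int.gcd (a * x + b) (c * x + d) = 1)).card : ℤ) * (4 * M) := by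
        have hLc : (L.toNat : ℤ) = L := Int.toNat_of_nonneg (by linarith)
        have hcc : L ≤ (((Finset.Icc (-(N:ℤ)) (N:ℤ)).filter
            (fun x => Int.gcd (a * x + b) (c * x + d) = 1)).card : ℤ) := by
          rw [← hLc]; exact_mod_cast hcount
        have h4 : L * (4 * (M:ℤ)) = 4 * ((M:ℤ) * L) := by ring
        nlinarith
      calc (1:ℝ) * (2 * N + 1) = ((2 * (N:ℤ) + 1 : ℤ) : ℝ) := by push_cast; ring
        _ ≤ (((((Finset.Icc (-(N:ℤ)) (N:ℤ)).filter
              (fun x => Int.gcd (a * x + b) (c * x + d) = 1)).card : ℤ) * (4 * M) : ℤ) : ℝ) := by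
            exact_mod_cast hint
        _ = (((Finset.Icc (-(N:ℤ)) (N:ℤ)).filter
              (fun x => Int.gcd (a * x + b) (c * x + d) = 1)).card : ℝ) * (4 * M) := by
            push_cast; ring
    have hb1 : ∀ N : ℕ, u N ≤ 1 := by
      intro N
      simp only [hu]
      rw [div_le_one (by positivity)]
      have := Finset.card_le_card (Finset.filter_subset
        (fun x => Int.gcd (a * x + b) (c * x + d) = 1) (Finset.Icc (-(N:ℤ)) (N:ℤ)))
      rw [hcard_Icc N] at this
      push_cast
      exact_mod_cast this
    have hcb : Filter.IsCoboundedUnder (· ≥ ·) Filter.atTop u :=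
      Filter.IsBoundedUnder.isCoboundedUnder_ge (Filter.isBoundedUnder_of ⟨1, hb1⟩)
    have hMR : (0:ℝ) < (M:ℝ) := by exact_mod_cast Nat.pos_of_ne_zero hM0
    exact lt_of_lt_of_le (by positivity) (Filter.le_liminf_of_le hcb hev)
end

section
/- Let a, b, c, d be integers with a ≠ 0 and c ≠ 0, and set f(x) = a*x + b and g(x) = c*x + d. If liminf_{N → ∞} (1/(2N+1)) * |{x ∈ ℤ : -N ≤ x ≤ N and gcd(f(x), g(x)) = 1}| > 0, then gcd(a, b, c, d) = 1 and a*d ≠ b*c. -/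
/-- If a nonnegative sequence is bounded by `C/(2N+1)`, its liminf is `≤ 0`. -/
lemma aux_liminf_le (f : ℕ → ℝ) (C : ℝ) (h0 : ∀ N, 0 ≤ f N)
    (hb : ∀ N : ℕ, f N ≤ C / (2 * (N : ℝ) + 1)) :
    Filter.liminf f Filter.atTop ≤ 0 := by
  have hden : Filter.Tendsto (fun N : ℕ => 2 * (N : ℝ) + 1) Filter.atTop Filter.atTop := by
    apply Filter.tendsto_atTop_add_const_right
    exact Filter.Tendsto.const_mul_atTop two_pos tendsto_natCast_atTop_atTop
  have hv : Filter.Tendsto (fun N : ℕ => C / (2 * (N : ℝ) + 1)) Filter.atTop (nhds 0) :=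
    Filter.Tendsto.div_atTop tendsto_const_nhds hden
  have hbdd : Filter.IsBoundedUnder (· ≥ ·) Filter.atTop f :=
    Filter.isBoundedUnder_of ⟨0, h0⟩
  have key : ∀ ε : ℝ, 0 < ε → Filter.liminf f Filter.atTop ≤ 0 + ε := by
    intro ε hε
    apply Filter.liminf_le_of_frequently_le _ hbdd
    have hev : ∀ᶠ N in Filter.atTop, f N ≤ 0 + ε := by
      filter_upwards [hv.eventually (gt_mem_nhds hε)] with N hN
      linarith [hb N]
    exact hev.frequently
  exact le_of_forall_pos_le_add key

/-- Necessity: if the lower asymptotic density of `x` with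
`gcd(a*x+b, c*x+d) = 1` over `[-N, N]` is positive, then `gcd(a,b,c,d) = 1`
and `a*d ≠ b*c`. -/
theorem stmt_2 (a b c d : ℤ) (ha : a ≠ 0) (hc : c ≠ 0)
    (hpos : 0 < Filter.liminf (fun N : ℕ =>
        (((Finset.Icc (-(N : ℤ)) (N : ℤ)).filter
          (fun x => Int.gcd (a * x + b) (c * x + d) = 1)).card : ℝ) / (2 * N + 1))
      Filter.atTop) :
    Int.gcd a (Int.gcd b (Int.gcd c d)) = 1 ∧ a * d ≠ b * c := by
  constructor
  · -- gcd = 1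
    by_contra hg
    set g : ℕ := Int.gcd a (Int.gcd b (Int.gcd c d)) with hgdef
    have hempty : ∀ N : ℕ, ((Finset.Icc (-(N : ℤ)) (N : ℤ)).filter
        (fun x => Int.gcd (a * x + b) (c * x + d) = 1)).card = 0 := by
      intro N
      rw [Finset.card_eq_zero, Finset.filter_eq_empty_iff]
      intro x _ hx1
      apply hg
      have hda : (g : ℤ) ∣ a := Int.gcd_dvd_left _ _
      have hdb : (g : ℤ) ∣ b := dvd_trans (Int.gcd_dvd_right _ _) (Int.gcd_dvd_left _ _)
      have hdc : (g : ℤ) ∣ c := dvd_trans (dvd_trans (Int.gcd_dvd_right _ _) (Int.gcd_dvd_right _ _))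
        (Int.gcd_dvd_left _ _)
      have hdd : (g : ℤ) ∣ d := dvd_trans (dvd_trans (Int.gcd_dvd_right _ _) (Int.gcd_dvd_right _ _))
        (Int.gcd_dvd_right _ _)
      have h1 : (g : ℤ) ∣ a * x + b := dvd_add (hda.mul_right x) hdb
      have h2 : (g : ℤ) ∣ c * x + d := dvd_add (hdc.mul_right x) hdd
      have : (g : ℤ) ∣ (Int.gcd (a * x + b) (c * x + d) : ℤ) := by exact_mod_cast Int.dvd_gcd h1 h2
      rw [hx1] at this
      exact_mod_cast Int.eq_one_of_dvd_one (by positivity) this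
    have hle : Filter.liminf (fun N : ℕ =>
        (((Finset.Icc (-(N : ℤ)) (N : ℤ)).filter
          (fun x => Int.gcd (a * x + b) (c * x + d) = 1)).card : ℝ) / (2 * N + 1))
        Filter.atTop ≤ 0 := by
      apply aux_liminf_le _ 0
      · intro N; positivity
      · intro N; rw [hempty N]; simp
    linarith
  · -- a*d ≠ b*c
    intro heq
    set M : ℤ := |a| + |b| with hM
    have hMpos : 0 ≤ M := by positivity
    have hsub : ∀ N : ℕ, ((Finset.Icc (-(N : ℤ)) (N : ℤ)).filter
        (fun x => Int.gcd (a * x + b) (c * x + d) = 1)) ⊆ Finset.Icc (-M) M := by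
      intro N x hx
      rw [Finset.mem_filter] at hx
      obtain ⟨-, hx1⟩ := hx
      have hcop : IsCoprime (a * x + b) (c * x + d) := Int.isCoprime_iff_gcd_eq_one.mpr hx1
      have hkey : c * (a * x + b) = a * (c * x + d) := by ring_nf; linarith [heq]
      have hdvd : (a * x + b) ∣ a * (c * x + d) := ⟨c, by linarith [hkey]⟩
      have hdvda : (a * x + b) ∣ a := hcop.dvd_of_dvd_mul_right hdvd
      have habs : |a * x + b| ≤ |a| := by
        apply Int.le_of_dvd (abs_pos.mpr ha)
        exact (abs_dvd _ _).mpr ((dvd_abs _ _).mpr hdvda)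
      have hax : |a * x| ≤ |a| + |b| := by
        calc |a * x| = |(a * x + b) + (-b)| := by ring_nf
          _ ≤ |a * x + b| + |(-b)| := abs_add_le _ _
          _ ≤ |a| + |b| := by rw [abs_neg]; linarith
      have hxle : |x| ≤ M := by
        have h1 : 1 ≤ |a| := Int.one_le_abs ha
        have h2 : |x| ≤ |a| * |x| := le_mul_of_one_le_left (abs_nonneg x) h1
        rw [abs_mul] at hax
        rw [hM]; linarith
      rw [Finset.mem_Icc]
      exact abs_le.mp hxle
    set C : ℝ := ((Finset.Icc (-M) M).card : ℝ) with hC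
    have hle : Filter.liminf (fun N : ℕ =>
        (((Finset.Icc (-(N : ℤ)) (N : ℤ)).filter
          (fun x => Int.gcd (a * x + b) (c * x + d) = 1)).card : ℝ) / (2 * N + 1))
        Filter.atTop ≤ 0 := by
      apply aux_liminf_le _ C
      · intro N; positivity
      · intro N
        have hcard : (((Finset.Icc (-(N : ℤ)) (N : ℤ)).filter
            (fun x => Int.gcd (a * x + b) (c * x + d) = 1)).card : ℝ) ≤ C := by
          rw [hC]; exact_mod_cast Finset.card_le_card (hsub N)
        have hden : (0 : ℝ) < 2 * (N : ℝ) + 1 := by positivity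
        gcongr
    linarith
end
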